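/- The read-before-write memory cell is coherent: the single-clock CCSˡᵐ process S defined by S ≝ w:{w}.S + r:{w}.S + σ:{r,w}.S is coherent modulo strong bisimilarity. In particular S is observable, its only derivative is S itself, the only pairs of independent transitions of S are the r-transition paired with itself and the σ-transition paired with itself, and both admit reconvergences with identical strategic labels. -/

import Mathlib

namespace CCSlm

/-- Labels 𝓛 = R ∪ {σ}: channel names with polarity (rendezvous actions) plus the single clock σ. -/
inductive Label (Name : Type) : Type
  | pos : Name → Label Name
  | neg : Name → Label Name
  | clock : Label Name

/-- Complementation ℓ ↦ ℓ̄ (an involution, with σ̄ = σ). -/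
def Label.bar {Name : Type} : Label Name → Label Name
  | .pos a => .neg a
  | .neg a => .pos a
  | .clock => .clock

/-- Actions Act = 𝓛 ∪ {τ}. -/
inductive Act (Name : Type) : Type
  | lab : Label Name → Act Name
  | tau : Act Name

/-- The (at most one) label of an action, as a set. -/
def Act.labels {Name : Type} : Act Name → Set (Label Name)
  | .lab ℓ => {ℓ}
  | .tau => ∅

/-- α ∈ R (α is a rendezvous action). -/
def Act.isRendezvous {Name : Type} : Act Name → Prop
  | .lab .clock => False
  | .tau => False
  | .lab _ => True

/-- α ∈ R ∪ {τ}. -/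
def Act.isRendezvousOrTau {Name : Type} : Act Name → Prop
  | .lab .clock => False
  | _ => True

/-- Clock horizons H = {⊥,⊤}, as `Bool` (`false` = ⊥ = ∅, `true` = ⊤ = {σ}), ordered by `≤`. -/
abbrev Horizon : Type := Bool

/-- Blocking relations B ⊆ H × 2^𝓛. -/
abbrev Blocking (Name : Type) : Type := Set (Horizon × Set (Label Name))

/-- Predictions ι : H → 2^𝓛. -/
abbrev Pred (Name : Type) : Type := Horizon → Set (Label Name)

variable {Name PName : Type}

/-- The induced blocking function [B](C) = { ℓ | ∃(C′,L′) ∈ B, C′ ⊆ C, ℓ ∈ L′ }. -/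
def blockSet (B : Blocking Name) (C : Horizon) : Set (Label Name) :=
  { ℓ | ∃ C' L, (C', L) ∈ B ∧ C' ≤ C ∧ ℓ ∈ L }

/-- B′ ⊑ B iff [B′](C) ⊆ [B](C) for all C. -/
def bleq (B' B : Blocking Name) : Prop :=
  ∀ C : Horizon, blockSet B' C ⊆ blockSet B C

/-- ι′ ⊑ ι iff ι′(C) ⊆ ι(C) for all C. -/
def pleq (ι' ι : Pred Name) : Prop :=
  ∀ C : Horizon, ι' C ⊆ ι C

/-- Pointwise union ι1 + ι2 of predictions. -/
def predAdd (ι1 ι2 : Pred Name) : Pred Name := fun C => ι1 C ∪ ι2 C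

/-- The empty prediction ι^∅. -/
def emptyPred : Pred Name := fun _ => ∅

/-- eschews(ι, B): for all (C,L′) ∈ B, ι(C) ∩ {ℓ̄ | ℓ ∈ L′} = ∅. -/
def eschews (ι : Pred Name) (B : Blocking Name) : Prop :=
  ∀ C L, (C, L) ∈ B → ι C ∩ (Label.bar '' L) = ∅

/-- Process terms of single-clock CCSˡᵐ (threads are merged into the process grammar):
process names, parallel composition, restriction, inactive 0_C, prefix α:L′.P, and sum. -/
inductive Proc (Name PName : Type) : Type
  | name : PName → Proc Name PName
  | par : Proc Name PName → Proc Name PName → Proc Name PName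
  | restr : Proc Name PName → Set Name → Proc Name PName
  | nil : Horizon → Proc Name PName
  | pre : Act Name → Set (Label Name) → Proc Name PName → Proc Name PName
  | sum : Proc Name PName → Proc Name PName → Proc Name PName

/-- The labels A′ ∪ Ā′ of a set A′ of channel names. -/
def chanLabels (A : Set Name) : Set (Label Name) :=
  { ℓ | ∃ a ∈ A, ℓ = .pos a ∨ ℓ = .neg a }

/-- σ ∈ 𝓛(P): the clock occurs free in P (through unfolding of process names). -/
inductive HasClock (env : PName → Proc Name PName) : Proc Name PName → Prop
  | nil : HasClock env (.nil true)
  | preClock (L : Set (Label Name)) (P : Proc Name PName) :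
      HasClock env (.pre (.lab .clock) L P)
  | preCont {P : Proc Name PName} (α : Act Name) (L : Set (Label Name)) :
      HasClock env P → HasClock env (.pre α L P)
  | parL {P : Proc Name PName} (Q : Proc Name PName) :
      HasClock env P → HasClock env (.par P Q)
  | parR (P : Proc Name PName) {Q : Proc Name PName} :
      HasClock env Q → HasClock env (.par P Q)
  | sumL {M : Proc Name PName} (N : Proc Name PName) :
      HasClock env M → HasClock env (.sum M N)
  | sumR (M : Proc Name PName) {N : Proc Name PName} :
      HasClock env N → HasClock env (.sum M N)
  | restr {P : Proc Name PName} (A : Set Name) :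
      HasClock env P → HasClock env (.restr P A)
  | name (p : PName) : HasClock env (env p) → HasClock env (.name p)

open Classical in
/-- The clock horizon clk(P) = 𝓛(P) ∩ {σ} ∈ H. -/
noncomputable def clk (env : PName → Proc Name PName) (P : Proc Name PName) : Horizon :=
  if HasClock env P then true else false

/-- Initial actions iA of a thread (as a set of labels; τ contributes nothing to predictions). -/
def iA : Proc Name PName → Set (Label Name)
  | .pre α _ _ => α.labels
  | .sum M N => iA M ∪ iA N
  | _ => ∅

/-- One level of the bounded syntactic prediction; `rec` handles process names
(it is the bounded prediction at the next-lower unfolding bound). -/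
def wilAgo (env : PName → Proc Name PName)
    (rec : Horizon → Proc Name PName → Set (Label Name)) :
    Horizon → Proc Name PName → Set (Label Name)
  | _, .nil _ => ∅
  | C, .pre (.lab .clock) _ P =>
      if C = true then {Label.clock} else insert Label.clock (wilAgo env rec C P)
  | C, .pre α _ P => α.labels ∪ wilAgo env rec C P
  | C, .restr P A => wilAgo env rec C P \ chanLabels A
  | C, .name p => rec C (env p)
  | C, .par P Q => wilAgo env rec C P ∪ wilAgo env rec C Q
  | C, .sum M N => wilAgo env rec C M ∪ wilAgo env rec C N

/-- The bounded syntactic prediction wilAⁿ_C(P) with at most n unfoldings of process names. -/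
def wilA (env : PName → Proc Name PName) : ℕ → Horizon → Proc Name PName → Set (Label Name)
  | 0 => wilAgo env fun _ _ => ∅
  | n + 1 => wilAgo env (wilA env n)

/-- iA*_C(P) = ⋃ₙ wilAⁿ_C(P): the labels occurring syntactically in P before any clock in C. -/
def iAstar (env : PName → Proc Name PName) (C : Horizon) (P : Proc Name PName) :
    Set (Label Name) :=
  ⋃ n : ℕ, wilA env n C P

/-- The prediction iA*₋(P) : C ↦ iA*_C(P). -/
def iAstarPred (env : PName → Proc Name PName) (P : Proc Name PName) : Pred Name :=
  fun C => iAstar env C P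

/-- Restriction B↾A of a blocking relation: remove A ∪ Ā from each entry. -/
def restrB (B : Blocking Name) (A : Set Name) : Blocking Name :=
  { q | ∃ C L, (C, L) ∈ B ∧ q = (C, L \ chanLabels A) }

/-- Restriction ι↾A of a prediction: remove A ∪ Ā pointwise. -/
def restrPred (ι : Pred Name) (A : Set Name) : Pred Name :=
  fun C => ι C \ chanLabels A

/-- Result ℓ ∥ ℓ̄ of synchronisation: a ∥ ā = τ and σ ∥ σ = σ. -/
def syncAct {Name : Type} : Label Name → Act Name
  | .clock => .lab .clock
  | _ => .tau

/-- The strategic labelled transition system of single-clock CCSˡᵐ (Fig. 1):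
P —α:B[ι]→ Q. -/
inductive Step (env : PName → Proc Name PName) :
    Proc Name PName → Act Name → Blocking Name → Pred Name → Proc Name PName → Prop
  | act (α : Act Name) (L : Set (Label Name)) (P : Proc Name PName) :
      Step env (.pre α L P) α {(clk env P, L)} emptyPred P
  | sumL {M : Proc Name PName} {α : Act Name} {B : Blocking Name} {ι : Pred Name}
      {P : Proc Name PName} (N : Proc Name PName) :
      Step env M α B ι P →
      Step env (.sum M N) α B (fun C => ι C ∪ (iA N \ α.labels)) P
  | sumR (M : Proc Name PName) {N : Proc Name PName} {α : Act Name} {B : Blocking Name}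
      {ι : Pred Name} {P : Proc Name PName} :
      Step env N α B ι P →
      Step env (.sum M N) α B (fun C => ι C ∪ (iA M \ α.labels)) P
  | con {p : PName} {α : Act Name} {B : Blocking Name} {ι : Pred Name} {P' : Proc Name PName} :
      Step env (env p) α B ι P' →
      Step env (.name p) α B ι P'
  | com {P1 P2 P1' P2' : Proc Name PName} {ℓ : Label Name} {B1 B2 : Blocking Name}
      {ι1 ι2 : Pred Name} :
      Step env P1 (.lab ℓ) B1 ι1 P1' →
      Step env P2 (.lab ℓ.bar) B2 ι2 P2' →
      eschews ι1 B2 → eschews ι2 B1 →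
      Step env (.par P1 P2) (syncAct ℓ) (B1 ∪ B2) (predAdd ι1 ι2) (.par P1' P2')
  | parL {P : Proc Name PName} {α : Act Name} {B : Blocking Name} {ι : Pred Name}
      {P' : Proc Name PName} (Q : Proc Name PName) :
      Step env P α B ι P' →
      (α = .lab .clock → ¬ HasClock env Q) →
      eschews (iAstarPred env Q) B →
      Step env (.par P Q) α B (predAdd ι (iAstarPred env Q)) (.par P' Q)
  | parR (P : Proc Name PName) {Q : Proc Name PName} {α : Act Name} {B : Blocking Name}
      {ι : Pred Name} {Q' : Proc Name PName} :
      Step env Q α B ι Q' →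
      (α = .lab .clock → ¬ HasClock env P) →
      eschews (iAstarPred env P) B →
      Step env (.par P Q) α B (predAdd ι (iAstarPred env P)) (.par P Q')
  | restr {P : Proc Name PName} {α : Act Name} {B : Blocking Name} {ι : Pred Name}
      {Q : Proc Name PName} (A : Set Name) :
      Step env P α B ι Q →
      (∀ ℓ, α = .lab ℓ → ℓ ∉ chanLabels A) →
      Step env (.restr P A) α (restrB B A) (restrPred ι A) (.restr Q A)

/-- One strategic step (labels existentially quantified). -/
def Tr (env : PName → Proc Name PName) (P Q : Proc Name PName) : Prop :=
  ∃ α B ι, Step env P α B ι Q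

/-- Q is a derivative of P: reachable by strategic transitions. -/
def Deriv (env : PName → Proc Name PName) : Proc Name PName → Proc Name PName → Prop :=
  Relation.ReflTransGen (Tr env)

/-- A congruence on processes: an equivalence compatible with the process operators. -/
structure IsCongruence (cong : Proc Name PName → Proc Name PName → Prop) : Prop where
  equiv : Equivalence cong
  pre : ∀ (α : Act Name) (L : Set (Label Name)) {P P' : Proc Name PName},
      cong P P' → cong (.pre α L P) (.pre α L P')
  sum : ∀ {M M' N N' : Proc Name PName}, cong M M' → cong N N' → cong (.sum M N) (.sum M' N')
  par : ∀ {P P' Q Q' : Proc Name PName}, cong P P' → cong Q Q' → cong (.par P Q) (.par P' Q')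
  restr : ∀ (A : Set Name) {P P' : Proc Name PName}, cong P P' → cong (.restr P A) (.restr P' A)

/-- P is observable (modulo cong). -/
def Observable (env : PName → Proc Name PName)
    (cong : Proc Name PName → Proc Name PName → Prop) (P : Proc Name PName) : Prop :=
  ∀ Q Q1 Q2 α1 α2 B1 B2 ι1 ι2,
    Deriv env P Q →
    Step env Q α1 B1 ι1 Q1 → Step env Q α2 B2 ι2 Q2 →
    (α1 ≠ α2 ∨ ¬ cong Q1 Q2) →
    ∀ ℓ1 ℓ2 : Label Name, α1 = .lab ℓ1 → α2 = .lab ℓ2 → ℓ1 ∈ ι2 true ∧ ℓ2 ∈ ι1 true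

/-- α ∉ [B](⊤). -/
def unblockedBy (α : Act Name) (B : Blocking Name) : Prop :=
  ∀ ℓ : Label Name, α = .lab ℓ → ℓ ∉ blockSet B true

/-- Independence (modulo cong) of two transitions out of the same process. -/
def Independent (cong : Proc Name PName → Proc Name PName → Prop)
    (α1 : Act Name) (B1 : Blocking Name) (Q1 : Proc Name PName)
    (α2 : Act Name) (B2 : Blocking Name) (Q2 : Proc Name PName) : Prop :=
  (α1 = .lab .clock ∧ α2 = .lab .clock) ∨
  (α1.isRendezvousOrTau ∧ α2.isRendezvousOrTau ∧
    ((¬ (α1 = .tau ∧ α2 = .tau) ∧ unblockedBy α1 B2 ∧ unblockedBy α2 B1) ∨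
     (α1 = α2 ∧ ¬ cong Q1 Q2)))

/-- The Diamond Property (CR) of a process Q (modulo cong). -/
def DiamondCR (env : PName → Proc Name PName)
    (cong : Proc Name PName → Proc Name PName → Prop) (Q : Proc Name PName) : Prop :=
  ∀ α1 B1 ι1 Q1 α2 B2 ι2 Q2,
    Step env Q α1 B1 ι1 Q1 → Step env Q α2 B2 ι2 Q2 →
    Independent cong α1 B1 Q1 α2 B2 Q2 →
    ∃ Q1' Q2' B1' ι1' B2' ι2',
      cong Q1' Q2' ∧
      Step env Q1 α2 B2' ι2' Q1' ∧ Step env Q2 α1 B1' ι1' Q2' ∧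
      bleq B1' B1 ∧ bleq B2' B2 ∧
      (α1.isRendezvous → pleq ι1' ι1) ∧ (α2.isRendezvous → pleq ι2' ι2)

/-- P is coherent (modulo cong): observable and every derivative satisfies (CR). -/
def Coherent (env : PName → Proc Name PName)
    (cong : Proc Name PName → Proc Name PName → Prop) (P : Proc Name PName) : Prop :=
  Observable env cong P ∧ ∀ Q, Deriv env P Q → DiamondCR env cong Q

/-- N is a normal form: no τ-transitions. -/
def NormalForm (env : PName → Proc Name PName) (N : Proc Name PName) : Prop :=
  ∀ B ι N', ¬ Step env N .tau B ι N'

/-- One reduction (τ-labelled) step. -/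
def Red (env : PName → Proc Name PName) (P Q : Proc Name PName) : Prop :=
  ∃ B ι, Step env P .tau B ι Q

/-- P ⇓ N: P reduces to the normal form N by finitely many τ-steps. -/
def ReducesTo (env : PName → Proc Name PName) (P N : Proc Name PName) : Prop :=
  Relation.ReflTransGen (Red env) P N ∧ NormalForm env N

/-- Strong bisimulations for the strategic LTS (matching full strategic labels). -/
def IsStrategicBisim (env : PName → Proc Name PName)
    (R : Proc Name PName → Proc Name PName → Prop) : Prop :=
  ∀ P Q, R P Q →
    (∀ α B ι P', Step env P α B ι P' → ∃ Q', Step env Q α B ι Q' ∧ R P' Q') ∧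
    (∀ α B ι Q', Step env Q α B ι Q' → ∃ P', Step env P α B ι P' ∧ R P' Q')

/-- Strong bisimilarity for the strategic LTS. -/
def StrategicBisim (env : PName → Proc Name PName) (P Q : Proc Name PName) : Prop :=
  ∃ R, IsStrategicBisim env R ∧ R P Q

/-- Milner's CCS labelled transition system P —α→ Q on the same syntax. -/
inductive CCSStep (env : PName → Proc Name PName) :
    Proc Name PName → Act Name → Proc Name PName → Prop
  | act (α : Act Name) (L : Set (Label Name)) (P : Proc Name PName) :
      CCSStep env (.pre α L P) α P
  | sumL {M : Proc Name PName} {α : Act Name} {P : Proc Name PName} (N : Proc Name PName) :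
      CCSStep env M α P → CCSStep env (.sum M N) α P
  | sumR (M : Proc Name PName) {N : Proc Name PName} {α : Act Name} {P : Proc Name PName} :
      CCSStep env N α P → CCSStep env (.sum M N) α P
  | con {p : PName} {α : Act Name} {P' : Proc Name PName} :
      CCSStep env (env p) α P' → CCSStep env (.name p) α P'
  | com {P1 P2 P1' P2' : Proc Name PName} (ℓ : Label Name) :
      CCSStep env P1 (.lab ℓ) P1' → CCSStep env P2 (.lab ℓ.bar) P2' →
      CCSStep env (.par P1 P2) .tau (.par P1' P2')
  | parL {P : Proc Name PName} {α : Act Name} {P' : Proc Name PName} (Q : Proc Name PName) :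
      CCSStep env P α P' → CCSStep env (.par P Q) α (.par P' Q)
  | parR (P : Proc Name PName) {Q : Proc Name PName} {α : Act Name} {Q' : Proc Name PName} :
      CCSStep env Q α Q' → CCSStep env (.par P Q) α (.par P Q')
  | restr {P : Proc Name PName} {α : Act Name} {Q : Proc Name PName} (A : Set Name) :
      CCSStep env P α Q → (∀ ℓ, α = .lab ℓ → ℓ ∉ chanLabels A) →
      CCSStep env (.restr P A) α (.restr Q A)

def CCSTr (env : PName → Proc Name PName) (P Q : Proc Name PName) : Prop :=
  ∃ α, CCSStep env P α Q

def CCSDeriv (env : PName → Proc Name PName) : Proc Name PName → Proc Name PName → Prop :=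
  Relation.ReflTransGen (CCSTr env)

/-- Strong bisimulations for Milner's CCS LTS. -/
def IsCCSBisim (env : PName → Proc Name PName)
    (R : Proc Name PName → Proc Name PName → Prop) : Prop :=
  ∀ P Q, R P Q →
    (∀ α P', CCSStep env P α P' → ∃ Q', CCSStep env Q α Q' ∧ R P' Q') ∧
    (∀ α Q', CCSStep env Q α Q' → ∃ P', CCSStep env P α P' ∧ R P' Q')

/-- Strong bisimilarity ∼ for Milner's CCS. -/
def CCSBisim (env : PName → Proc Name PName) (P Q : Proc Name PName) : Prop :=
  ∃ R, IsCCSBisim env R ∧ R P Q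

/-- P is determinate (modulo ∼) in Milner's CCS. -/
def CCSDeterminate (env : PName → Proc Name PName) (P : Proc Name PName) : Prop :=
  ∀ Q, CCSDeriv env P Q → ∀ α Q1 Q2,
    CCSStep env Q α Q1 → CCSStep env Q α Q2 → CCSBisim env Q1 Q2

/-- P is strongly confluent (modulo ∼) in Milner's CCS. -/
def CCSStronglyConfluent (env : PName → Proc Name PName) (P : Proc Name PName) : Prop :=
  CCSDeterminate env P ∧
  ∀ Q, CCSDeriv env P Q → ∀ α1 α2 Q1 Q2, α1 ≠ α2 →
    CCSStep env Q α1 Q1 → CCSStep env Q α2 Q2 →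
    ∃ Q1' Q2', CCSBisim env Q1' Q2' ∧ CCSStep env Q1 α2 Q1' ∧ CCSStep env Q2 α1 Q2'

/-- The clock-free, priority-free fragment: inactive subterms are 0_⊥, no prefix action is σ,
and all blocking sets are empty. -/
def ClockFree : Proc Name PName → Prop
  | .nil C => C = false
  | .pre α L P => α ≠ .lab .clock ∧ L = ∅ ∧ ClockFree P
  | .sum M N => ClockFree M ∧ ClockFree N
  | .par P Q => ClockFree P ∧ ClockFree Q
  | .restr P _ => ClockFree P
  | .name _ => True

/-- Well-formedness: direct subprocesses of threads have the same clock horizon as the thread. -/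
def WF (env : PName → Proc Name PName) : Proc Name PName → Prop
  | .nil _ => True
  | .pre α L P => WF env P ∧ (HasClock env (.pre α L P) ↔ HasClock env P)
  | .sum M N => WF env M ∧ WF env N ∧ (HasClock env M ↔ HasClock env N)
  | .par P Q => WF env P ∧ WF env Q
  | .restr P _ => WF env P
  | .name _ => True

/-- P has exactly one derivable strategic transition, namely α to Q (with some label B[ι]). -/
def UniqueStep (env : PName → Proc Name PName) (P : Proc Name PName) (α : Act Name)
    (Q : Proc Name PName) : Prop :=
  ∃ B ι, Step env P α B ι Q ∧
    ∀ α' B' ι' Q', Step env P α' B' ι' Q' → α' = α ∧ B' = B ∧ ι' = ι ∧ Q' = Q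

end CCSlm

namespace CCSlm

/-- Channel names r and w. -/
inductive CH : Type
  | r
  | w

/-- A single process name S. -/
inductive PN : Type
  | S

def rLab : Label CH := .pos .r
def wLab : Label CH := .pos .w

/-- The body of S ≝ w:{w}.S + r:{w}.S + σ:{r,w}.S. -/
def Sbody : Proc CH PN :=
  .sum (.pre (.lab wLab) {wLab} (.name .S))
    (.sum (.pre (.lab rLab) {wLab} (.name .S))
      (.pre (.lab .clock) {rLab, wLab} (.name .S)))

def envS : PN → Proc CH PN := fun _ => Sbody

/-- Canonical blocking relations and predictions of the three transitions of S. -/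
def BwS : Blocking CH := {(true, {wLab})}
def BcS : Blocking CH := {(true, ({rLab, wLab} : Set (Label CH)))}
def ιwS : Pred CH := fun _ => {rLab, Label.clock}
def ιrS : Pred CH := fun _ => {wLab, Label.clock}
def ιcS : Pred CH := fun _ => {rLab, wLab}

lemma hasClockS : HasClock envS (.name PN.S) := by
  refine .name _ ?_
  show HasClock envS Sbody
  exact .sumR _ (.sumR _ (.preClock _ _))

lemma clkS : clk envS (.name PN.S) = true := if_pos hasClockS

lemma rw_ne : rLab ≠ wLab := by simp [rLab, wLab]
lemma wr_ne : wLab ≠ rLab := by simp [rLab, wLab]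
lemma rclk_ne : rLab ≠ Label.clock := by simp [rLab]
lemma wclk_ne : wLab ≠ Label.clock := by simp [wLab]

lemma bisimRefl (P : Proc CH PN) : StrategicBisim envS P P := by
  refine ⟨Eq, ?_, rfl⟩
  intro P Q h; subst h
  exact ⟨fun α B ι P' h => ⟨P', h, rfl⟩, fun α B ι Q' h => ⟨Q', h, rfl⟩⟩

/-- The three canonical transitions of S. -/
lemma stepS_w : Step envS (.name PN.S) (.lab wLab) BwS ιwS (.name PN.S) := by
  refine Step.con ?_
  show Step envS Sbody _ _ _ _
  have h := Step.sumL (env := envS)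
    (.sum (.pre (.lab rLab) {wLab} (.name .S)) (.pre (.lab .clock) {rLab, wLab} (.name .S)))
    (Step.act (.lab wLab) {wLab} (.name PN.S))
  have e1 : ({(clk envS (.name PN.S), ({wLab} : Set (Label CH)))} : Blocking CH) = BwS := by
    rw [clkS]; rfl
  have e2 : (fun C => emptyPred C ∪
      (iA (Proc.sum (.pre (.lab rLab) {wLab} (.name PN.S))
        (.pre (.lab .clock) {rLab, wLab} (.name PN.S))) \ (Act.lab wLab).labels)) = ιwS := by
    funext C; ext ℓ
    simp only [emptyPred, iA, Act.labels, ιwS, Set.mem_union, Set.mem_diff,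
      Set.mem_empty_iff_false, Set.mem_singleton_iff, Set.mem_insert_iff, false_or]
    constructor
    · rintro ⟨h | h, -⟩ <;> simp [h]
    · rintro (h | h) <;> subst h <;>
        exact ⟨by simp, by simp [rw_ne, wclk_ne, Ne.symm wclk_ne]⟩
  rw [e1] at h
  rw [e2] at h
  exact h

lemma stepS_r : Step envS (.name PN.S) (.lab rLab) BwS ιrS (.name PN.S) := by
  refine Step.con ?_
  show Step envS Sbody _ _ _ _
  have h0 := Step.sumL (env := envS) (.pre (.lab .clock) {rLab, wLab} (.name .S))
    (Step.act (.lab rLab) {wLab} (.name PN.S))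
  have h := Step.sumR (env := envS) (.pre (.lab wLab) {wLab} (.name .S)) h0
  have e1 : ({(clk envS (.name PN.S), ({wLab} : Set (Label CH)))} : Blocking CH) = BwS := by
    rw [clkS]; rfl
  rw [e1] at h
  have e2 : (fun C => ((fun C => emptyPred C ∪
      (iA (Proc.pre (.lab .clock) {rLab, wLab} (.name PN.S)) \ (Act.lab rLab).labels)) C ∪
      (iA (Proc.pre (.lab wLab) {wLab} (.name PN.S)) \ (Act.lab rLab).labels))) = ιrS := by
    funext C; ext ℓ
    simp only [emptyPred, iA, Act.labels, ιrS, Set.mem_union, Set.mem_diff,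
      Set.mem_empty_iff_false, Set.mem_singleton_iff, Set.mem_insert_iff, false_or]
    constructor
    · rintro (⟨h, -⟩ | ⟨h, -⟩) <;> simp [h]
    · rintro (h | h) <;> subst h
      · exact Or.inr ⟨rfl, wr_ne⟩
      · exact Or.inl ⟨rfl, Ne.symm rclk_ne⟩
  rw [e2] at h
  exact h

lemma stepS_c : Step envS (.name PN.S) (.lab .clock) BcS ιcS (.name PN.S) := by
  refine Step.con ?_
  show Step envS Sbody _ _ _ _
  have h0 := Step.sumR (env := envS) (.pre (.lab rLab) {wLab} (.name .S))
    (Step.act (.lab .clock) {rLab, wLab} (.name PN.S))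
  have h := Step.sumR (env := envS) (.pre (.lab wLab) {wLab} (.name .S)) h0
  have e1 : ({(clk envS (.name PN.S), ({rLab, wLab} : Set (Label CH)))} : Blocking CH) = BcS := by
    rw [clkS]; rfl
  rw [e1] at h
  have e2 : (fun C => ((fun C => emptyPred C ∪
      (iA (Proc.pre (.lab rLab) {wLab} (.name PN.S)) \ (Act.lab Label.clock).labels)) C ∪
      (iA (Proc.pre (.lab wLab) {wLab} (.name PN.S)) \ (Act.lab Label.clock).labels))) = ιcS := by
    funext C; ext ℓ
    simp only [emptyPred, iA, Act.labels, ιcS, Set.mem_union, Set.mem_diff,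
      Set.mem_empty_iff_false, Set.mem_singleton_iff, Set.mem_insert_iff, false_or]
    constructor
    · rintro (⟨h, -⟩ | ⟨h, -⟩) <;> simp [h]
    · rintro (h | h) <;> subst h
      · exact Or.inl ⟨rfl, rclk_ne⟩
      · exact Or.inr ⟨rfl, wclk_ne⟩
  rw [e2] at h
  exact h

/-- Inversion for the steps of S. -/
lemma stepS_inv {α : Act CH} {B : Blocking CH} {ι : Pred CH} {Q : Proc CH PN}
    (h : Step envS (.name PN.S) α B ι Q) :
    Q = .name PN.S ∧
    ((α = .lab wLab ∧ B = BwS ∧ ι = ιwS) ∨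
     (α = .lab rLab ∧ B = BwS ∧ ι = ιrS) ∨
     (α = .lab .clock ∧ B = BcS ∧ ι = ιcS)) := by
  cases h with
  | con h' =>
    have h'' : Step envS Sbody α B ι Q := h'
    unfold Sbody at h''
    cases h'' with
    | sumL _ hw =>
      cases hw
      refine ⟨rfl, Or.inl ⟨rfl, ?_, ?_⟩⟩
      · rw [clkS]; rfl
      · funext C; ext ℓ
        simp only [emptyPred, iA, Act.labels, ιwS, Set.mem_union, Set.mem_diff,
          Set.mem_empty_iff_false, Set.mem_singleton_iff, Set.mem_insert_iff, false_or]
        constructor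
        · rintro ⟨h | h, -⟩ <;> simp [h]
        · rintro (h | h) <;> subst h <;>
            exact ⟨by simp, by simp [rw_ne, wclk_ne, Ne.symm wclk_ne]⟩
    | sumR _ hrc =>
      cases hrc with
      | sumL _ hr =>
        cases hr
        refine ⟨rfl, Or.inr (Or.inl ⟨rfl, ?_, ?_⟩)⟩
        · rw [clkS]; rfl
        · funext C; ext ℓ
          simp only [emptyPred, iA, Act.labels, ιrS, Set.mem_union, Set.mem_diff,
            Set.mem_empty_iff_false, Set.mem_singleton_iff, Set.mem_insert_iff, false_or]
          constructor
          · rintro (⟨h, -⟩ | ⟨h, -⟩) <;> simp [h]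
          · rintro (h | h) <;> subst h
            · exact Or.inr ⟨rfl, wr_ne⟩
            · exact Or.inl ⟨rfl, Ne.symm rclk_ne⟩
      | sumR _ hc =>
        cases hc
        refine ⟨rfl, Or.inr (Or.inr ⟨rfl, ?_, ?_⟩)⟩
        · rw [clkS]; rfl
        · funext C; ext ℓ
          simp only [emptyPred, iA, Act.labels, ιcS, Set.mem_union, Set.mem_diff,
            Set.mem_empty_iff_false, Set.mem_singleton_iff, Set.mem_insert_iff, false_or]
          constructor
          · rintro (⟨h, -⟩ | ⟨h, -⟩) <;> simp [h]
          · rintro (h | h) <;> subst h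
            · exact Or.inl ⟨rfl, rclk_ne⟩
            · exact Or.inr ⟨rfl, wclk_ne⟩

lemma derivS {Q : Proc CH PN} (h : Deriv envS (.name PN.S) Q) : Q = .name PN.S := by
  induction h with
  | refl => rfl
  | tail _ h2 ih =>
    subst ih
    obtain ⟨α, B, ι, st⟩ := h2
    exact (stepS_inv st).1

lemma wLab_blocked : wLab ∈ blockSet BwS true :=
  ⟨true, {wLab}, rfl, le_refl _, rfl⟩

lemma r_unblocked : unblockedBy (.lab rLab) BwS := by
  intro ℓ he hmem
  injection he with he; subst he
  obtain ⟨C', L, hBL, -, hl⟩ := hmem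
  simp only [BwS, Set.mem_singleton_iff, Prod.mk.injEq] at hBL
  rw [hBL.2] at hl
  exact rw_ne hl

/-- The read-before-write memory cell S ≝ w:{w}.S + r:{w}.S + σ:{r,w}.S is coherent modulo
strong bisimilarity; in particular it is observable, its only derivative is S itself, the
only pairs of independent transitions are the r-transition with itself and the σ-transition
with itself, and both admit reconvergences with identical strategic labels. -/
theorem read_before_write_cell_coherent :
    Coherent envS (StrategicBisim envS) (.name PN.S) ∧
    Observable envS (StrategicBisim envS) (.name PN.S) ∧
    (∀ Q, Deriv envS (.name PN.S) Q → Q = .name PN.S) ∧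
    (∃ Br ιr, Step envS (.name PN.S) (.lab rLab) Br ιr (.name PN.S) ∧
      Independent (StrategicBisim envS) (.lab rLab) Br (.name PN.S)
        (.lab rLab) Br (.name PN.S)) ∧
    (∃ Bσ ισ, Step envS (.name PN.S) (.lab .clock) Bσ ισ (.name PN.S) ∧
      Independent (StrategicBisim envS) (.lab .clock) Bσ (.name PN.S)
        (.lab .clock) Bσ (.name PN.S)) ∧
    (∀ α1 B1 ι1 Q1 α2 B2 ι2 Q2,
      Step envS (.name PN.S) α1 B1 ι1 Q1 →
      Step envS (.name PN.S) α2 B2 ι2 Q2 →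
      Independent (StrategicBisim envS) α1 B1 Q1 α2 B2 Q2 →
      (((α1 = .lab rLab ∧ α2 = .lab rLab) ∨ (α1 = .lab .clock ∧ α2 = .lab .clock)) ∧
        ∃ Q1' Q2', StrategicBisim envS Q1' Q2' ∧
          Step envS Q1 α2 B2 ι2 Q1' ∧ Step envS Q2 α1 B1 ι1 Q2')) := by
  have obs : Observable envS (StrategicBisim envS) (.name PN.S) := by
    intro Q Q1 Q2 α1 α2 B1 B2 ι1 ι2 hder h1 h2 hne ℓ1 ℓ2 e1 e2
    have hQ := derivS hder; subst hQ
    obtain ⟨hQ1, hc1⟩ := stepS_inv h1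
    obtain ⟨hQ2, hc2⟩ := stepS_inv h2
    subst hQ1; subst hQ2
    have hne' : α1 ≠ α2 := by
      rcases hne with h | h
      · exact h
      · exact absurd (bisimRefl _) h
    rcases hc1 with ⟨ha1, hB1, hι1⟩ | ⟨ha1, hB1, hι1⟩ | ⟨ha1, hB1, hι1⟩ <;>
      rcases hc2 with ⟨ha2, hB2, hι2⟩ | ⟨ha2, hB2, hι2⟩ | ⟨ha2, hB2, hι2⟩ <;>
      subst ha1 <;> subst ha2 <;> subst hι1 <;> subst hι2 <;>
      first
        | exact absurd rfl hne'
        | (injection e1 with e1; injection e2 with e2; subst e1; subst e2;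
           exact ⟨by simp [ιwS, ιrS, ιcS], by simp [ιwS, ιrS, ιcS]⟩)
  have hdcr : ∀ Q, Deriv envS (.name PN.S) Q → DiamondCR envS (StrategicBisim envS) Q := by
    intro Q hQ α1 B1 ι1 Q1 α2 B2 ι2 Q2 h1 h2 _
    have hq := derivS hQ; subst hq
    have e1 := (stepS_inv h1).1
    have e2 := (stepS_inv h2).1
    refine ⟨Q2, Q1, B1, ι1, B2, ι2, ?_, ?_, ?_, fun C => subset_rfl, fun C => subset_rfl,
      fun _ C => subset_rfl, fun _ C => subset_rfl⟩
    · rw [e1, e2]; exact bisimRefl _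
    · rw [e1]; exact h2
    · rw [e2]; exact h1
  refine ⟨⟨obs, hdcr⟩, obs, fun Q h => derivS h, ?_, ?_, ?_⟩
  · refine ⟨BwS, ιrS, stepS_r, Or.inr ⟨trivial, trivial, Or.inl ⟨?_, r_unblocked, r_unblocked⟩⟩⟩
    rintro ⟨h, -⟩; cases h
  · exact ⟨BcS, ιcS, stepS_c, Or.inl ⟨rfl, rfl⟩⟩
  · intro α1 B1 ι1 Q1 α2 B2 ι2 Q2 h1 h2 hind
    obtain ⟨hQ1, hc1⟩ := stepS_inv h1
    obtain ⟨hQ2, hc2⟩ := stepS_inv h2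
    have recon : ∃ Q1' Q2', StrategicBisim envS Q1' Q2' ∧
        Step envS Q1 α2 B2 ι2 Q1' ∧ Step envS Q2 α1 B1 ι1 Q2' := by
      refine ⟨Q2, Q1, ?_, ?_, ?_⟩
      · rw [hQ1, hQ2]; exact bisimRefl _
      · rw [hQ1]; exact h2
      · rw [hQ2]; exact h1
    refine ⟨?_, recon⟩
    rcases hind with ⟨hcl1, hcl2⟩ | ⟨hrt1, hrt2, hcase⟩
    · exact Or.inr ⟨hcl1, hcl2⟩
    · have hnb : ¬ StrategicBisim envS Q1 Q2 → False := by
        intro h; rw [hQ1, hQ2] at h; exact h (bisimRefl _)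
      rcases hc1 with ⟨ha1, hB1, -⟩ | ⟨ha1, hB1, -⟩ | ⟨ha1, -, -⟩
      · -- α1 = w : blocked by B2 in either case
        subst ha1; subst hB1
        rcases hcase with ⟨-, hub1, -⟩ | ⟨-, hnc⟩
        · rcases hc2 with ⟨ha2, hB2, -⟩ | ⟨ha2, hB2, -⟩ | ⟨ha2, -, -⟩
          · subst hB2; exact absurd wLab_blocked (hub1 wLab rfl)
          · subst hB2; exact absurd wLab_blocked (hub1 wLab rfl)
          · subst ha2; exact absurd hrt2 (by intro h; exact h)
        · exact absurd hnc (fun h => hnb h)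
      · -- α1 = r
        subst ha1; subst hB1
        rcases hc2 with ⟨ha2, hB2, -⟩ | ⟨ha2, hB2, -⟩ | ⟨ha2, -, -⟩
        · subst ha2; subst hB2
          rcases hcase with ⟨-, -, hub2⟩ | ⟨heq, hnc⟩
          · exact absurd wLab_blocked (hub2 wLab rfl)
          · exact absurd (Act.lab.inj heq) rw_ne
        · exact Or.inl ⟨rfl, ha2⟩
        · subst ha2; exact absurd hrt2 (by intro h; exact h)
      · subst ha1; exact absurd hrt1 (by intro h; exact h)

end CCSlm
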